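/- Let $n \ge 1$ and let $\mu$ be an exchangeable probability measure on $\{0,1\}^n$ (or equivalently $\{\pm 1\}^n$). Let $E_k$ be the event that exactly the first $k$ coordinates equal $1$ and the rest equal $0$. Then $\mu$ extends to an infinite exchangeable sequence whose de Finetti mixing variable $W$ satisfies $W \in (0,1)$ a.s. if and only if there exist a real random variable $\xi$ and $c > 0$ such that $E[e^{(2k-n)\xi}] = c\,\mu(E_k)$ for all $k = 0,1,\dots,n$. -/

import Mathlib

open MeasureTheory ENNReal NNReal


lemma exists_perm (n k : ℕ) (f : Fin n → Bool)
    (hf : Fintype.card {i : Fin n // f i = true} = k) (hk : k ≤ n) :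
    ∃ σ : Equiv.Perm (Fin n), ∀ i, f (σ i) = decide ((i : ℕ) < k) := by
  have h1 : Fintype.card {i : Fin n // (i : ℕ) < k} = Fintype.card {i : Fin n // f i = true} := by
    rw [hf, Fintype.card_fin_lt_of_le hk]
  have h2 : Fintype.card {i : Fin n // ¬ (i : ℕ) < k} = Fintype.card {i : Fin n // ¬ f i = true} := by
    have := Fintype.card_subtype_compl (fun i : Fin n => (i : ℕ) < k)
    have := Fintype.card_subtype_compl (fun i : Fin n => f i = true)
    omega
  let e₁ := Fintype.equivOfCardEq h1
  let e₂ := Fintype.equivOfCardEq h2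
  refine ⟨Equiv.subtypeCongr e₁ e₂, fun i => ?_⟩
  by_cases h : (i : ℕ) < k
  · have : f (Equiv.subtypeCongr e₁ e₂ i) = true := by
      have : Equiv.subtypeCongr e₁ e₂ i = (e₁ ⟨i, h⟩ : Fin n) := by
        simp [Equiv.subtypeCongr, h]
      rw [this]
      exact (e₁ ⟨i, h⟩).2
    simp [this, h]
  · have : ¬ f (Equiv.subtypeCongr e₁ e₂ i) = true := by
      have : Equiv.subtypeCongr e₁ e₂ i = (e₂ ⟨i, h⟩ : Fin n) := by
        simp [Equiv.subtypeCongr, h]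
      rw [this]
      exact (e₂ ⟨i, h⟩).2
    simp only [Bool.not_eq_true] at this
    simp [this, h]

lemma E_singleton (n k : ℕ) (E : ℕ → Set (Fin n → Bool))
    (hE : ∀ k, E k = {f | ∀ i : Fin n, (f i = true ↔ (i : ℕ) < k)}) :
    E k = {fun i : Fin n => decide ((i : ℕ) < k)} := by
  rw [hE]
  ext f
  simp only [Set.mem_setOf_eq, Set.mem_singleton_iff, funext_iff]
  refine forall_congr' fun i => ?_
  constructor
  · intro h
    rcases Bool.eq_false_or_eq_true (f i) with h' | h' <;> simp_all
  · intro h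
    rw [h]; simp

lemma key_sum (n : ℕ)
    (μ : Measure (Fin n → Bool)) [IsProbabilityMeasure μ]
    (hexch : ∀ π : Equiv.Perm (Fin n), Measure.map (fun f => f ∘ π) μ = μ)
    (E : ℕ → Set (Fin n → Bool))
    (hE : ∀ k, E k = {f | ∀ i : Fin n, (f i = true ↔ (i : ℕ) < k)}) :
    ∑ k ∈ Finset.range (n + 1), (n.choose k : ℝ≥0∞) * μ (E k) = 1 := by
  classical
  have hmeas : ∀ s : Set (Fin n → Bool), MeasurableSet s := fun s => s.toFinite.measurableSet
  -- every singleton has measure μ (E (count f))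
  have count_le : ∀ f : Fin n → Bool, Fintype.card {i : Fin n // f i = true} ≤ n := by
    intro f
    simpa using Fintype.card_subtype_le (fun i : Fin n => f i = true)
  have key : ∀ f : Fin n → Bool, μ {f} = μ (E (Fintype.card {i : Fin n // f i = true})) := by
    intro f
    set k := Fintype.card {i : Fin n // f i = true} with hk
    obtain ⟨σ, hσ⟩ := exists_perm n k f hk.symm (count_le f)
    have hf : f = (fun i : Fin n => decide ((i : ℕ) < k)) ∘ σ.symm := by
      funext i
      simp only [Function.comp_apply]
      rw [← hσ (σ.symm i), Equiv.apply_symm_apply]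
    rw [E_singleton n k E hE]
    have hm : Measurable (fun g : Fin n → Bool => g ∘ ⇑σ) :=
      measurable_pi_lambda _ (fun _ => measurable_pi_apply _)
    have h2 : μ ((fun g : Fin n → Bool => g ∘ ⇑σ) ⁻¹' {fun i : Fin n => decide ((i : ℕ) < k)})
        = μ {fun i : Fin n => decide ((i : ℕ) < k)} := by
      rw [← Measure.map_apply hm (hmeas _), hexch σ]
    have hpre : (fun g : Fin n → Bool => g ∘ σ) ⁻¹' {fun i : Fin n => decide ((i : ℕ) < k)}
        = {f} := by
      ext g
      simp only [Set.mem_preimage, Set.mem_singleton_iff]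
      constructor
      · intro h
        funext i
        have := congrFun h (σ.symm i)
        simpa [hf] using this
      · intro h
        subst h
        funext i
        simp [hf]
    rw [hpre] at h2
    exact h2
  -- μ univ = sum over singletons
  have huniv : (1 : ℝ≥0∞) = ∑ f : Fin n → Bool, μ {f} := by
    have h0 : Set.univ = ⋃ f ∈ (Finset.univ : Finset (Fin n → Bool)), ({f} : Set (Fin n → Bool)) := by
      simp
      exact (Set.iUnion_of_singleton _).symm
    rw [← measure_univ (μ := μ), h0,
      measure_biUnion_finset ?_ (fun _ _ => hmeas _)]
    intro a _ b _ hab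
    exact Set.disjoint_singleton.mpr hab
  -- group by count
  have hfib : ∀ k ∈ Finset.range (n + 1),
      (Finset.univ.filter
        (fun f : Fin n → Bool => Fintype.card {i : Fin n // f i = true} = k)).card
        = n.choose k := by
    intro k hk
    have h1 : n.choose k = (Finset.powersetCard k (Finset.univ : Finset (Fin n))).card := by
      rw [Finset.card_powersetCard, Finset.card_univ, Fintype.card_fin]
    rw [h1]
    apply Finset.card_bij (fun f _ => Finset.univ.filter (fun i => f i = true))
    · intro f hf
      rw [Finset.mem_powersetCard]
      refine ⟨Finset.filter_subset _ _, ?_⟩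
      rw [← Fintype.card_subtype]
      exact (Finset.mem_filter.mp hf).2
    · intro f hf g hg hfg
      funext i
      have := Finset.ext_iff.mp hfg i
      simp only [Finset.mem_filter, Finset.mem_univ, true_and] at this
      cases h' : g i
      · cases h'' : f i
        · rfl
        · exact absurd (this.mp h'') (by simp [h'])
      · exact this.mpr h'
    · intro s hs
      rw [Finset.mem_powersetCard] at hs
      refine ⟨fun i => decide (i ∈ s), ?_, ?_⟩
      · simp only [Finset.mem_filter, Finset.mem_univ, true_and]
        rw [Fintype.card_subtype, ← hs.2]
        congr 1
        ext i
        simp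
      · ext i
        simp
  calc ∑ k ∈ Finset.range (n + 1), (n.choose k : ℝ≥0∞) * μ (E k)
      = ∑ k ∈ Finset.range (n + 1),
        ∑ _f ∈ Finset.univ.filter
          (fun f : Fin n → Bool => Fintype.card {i : Fin n // f i = true} = k), μ (E k) := by
        refine Finset.sum_congr rfl fun k hk => ?_
        rw [Finset.sum_const, hfib k hk, nsmul_eq_mul]
    _ = ∑ k ∈ Finset.range (n + 1),
        ∑ f ∈ Finset.univ.filter
          (fun f : Fin n → Bool => Fintype.card {i : Fin n // f i = true} = k),
          μ (E (Fintype.card {i : Fin n // f i = true})) := by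
        refine Finset.sum_congr rfl fun k _ => Finset.sum_congr rfl fun f hf => ?_
        rw [(Finset.mem_filter.mp hf).2]
    _ = ∑ f : Fin n → Bool, μ (E (Fintype.card {i : Fin n // f i = true})) := by
        apply Finset.sum_fiberwise_of_maps_to
        intro f _
        simp [Finset.mem_range, Nat.lt_succ_iff, count_le f]
    _ = 1 := by
        rw [huniv]
        exact Finset.sum_congr rfl fun f _ => (key f).symm


lemma pt_fwd (n k : ℕ) (hk : k ≤ n) (w : ℝ) (hw : w ∈ Set.Ioo (0:ℝ) 1) :
    Real.exp ((2 * (k:ℝ) - n) * (Real.log (w / (1 - w)) / 2)) * (w * (1 - w)) ^ ((n:ℝ)/2)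
      = w ^ k * (1 - w) ^ (n - k) := by
  obtain ⟨hw0, hw1⟩ := hw
  have h1 : (0:ℝ) < 1 - w := by linarith
  set a : ℝ := (2 * (k:ℝ) - n) / 2 with ha
  have hdiv : (0:ℝ) < w / (1 - w) := div_pos hw0 h1
  have e1 : Real.exp ((2 * (k:ℝ) - n) * (Real.log (w / (1 - w)) / 2))
      = (w / (1 - w)) ^ a := by
    rw [Real.rpow_def_of_pos hdiv]
    rw [ha]
    ring_nf
  rw [e1, Real.div_rpow hw0.le h1.le, Real.mul_rpow hw0.le h1.le]
  have h2 : a + (n:ℝ)/2 = (k:ℝ) := by rw [ha]; ring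
  have h3 : (n:ℝ)/2 - a = ((n - k : ℕ) : ℝ) := by
    rw [ha, Nat.cast_sub hk]; ring
  calc w ^ a / (1-w) ^ a * (w ^ ((n:ℝ)/2) * (1-w) ^ ((n:ℝ)/2))
      = (w ^ a * w ^ ((n:ℝ)/2)) * ((1-w) ^ ((n:ℝ)/2) / (1-w) ^ a) := by ring
    _ = w ^ (a + (n:ℝ)/2) * (1-w) ^ ((n:ℝ)/2 - a) := by
        rw [← Real.rpow_add hw0, ← Real.rpow_sub h1]
    _ = w ^ k * (1 - w) ^ (n - k) := by
        rw [h2, h3, Real.rpow_natCast, Real.rpow_natCast]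

lemma forward (n : ℕ) (m : ℕ → ℝ)
    (ρ : Measure ℝ) [IsProbabilityMeasure ρ] (hρc : ρ (Set.Ioo (0:ℝ) 1)ᶜ = 0)
    (hmom : ∀ k ≤ n, m k = ∫ w, w ^ k * (1 - w) ^ (n - k) ∂ρ) :
    ∃ (ξ : Measure ℝ) (c : ℝ), IsProbabilityMeasure ξ ∧ 0 < c ∧ ∀ k ≤ n,
      Integrable (fun x => Real.exp ((2 * (k:ℝ) - n) * x)) ξ ∧
      ∫ x, Real.exp ((2 * (k:ℝ) - n) * x) ∂ξ = c * m k := by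
  classical
  set W : ℝ → ℝ := fun w => (w * (1 - w)) ^ ((n:ℝ)/2) with hW
  have hWmeas : Measurable W :=
    (measurable_id.mul (measurable_const.sub measurable_id)).pow measurable_const
  have hae : ∀ᵐ w ∂ρ, w ∈ Set.Ioo (0:ℝ) 1 := by
    rw [ae_iff]
    exact hρc
  have hWnn : 0 ≤ᵐ[ρ] W := by
    filter_upwards [hae] with w hw
    exact Real.rpow_nonneg (by nlinarith [hw.1, hw.2]) _
  have hWle : ∀ᵐ w ∂ρ, ‖W w‖ ≤ 1 := by
    filter_upwards [hae] with w hw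
    have h0 : (0:ℝ) ≤ w * (1 - w) := by nlinarith [hw.1, hw.2]
    have h1 : w * (1 - w) ≤ 1 := by nlinarith [hw.1, hw.2]
    rw [Real.norm_eq_abs, abs_of_nonneg (Real.rpow_nonneg h0 _)]
    exact Real.rpow_le_one h0 h1 (by positivity)
  have hWint : Integrable W ρ :=
    (integrable_const 1).mono' hWmeas.aestronglyMeasurable hWle
  set Z : ℝ := ∫ w, W w ∂ρ with hZ
  have hIoo : ρ (Set.Ioo (0:ℝ) 1) = 1 := by
    have := measure_add_measure_compl (μ := ρ) (measurableSet_Ioo (a := (0:ℝ)) (b := 1))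
    rw [hρc, add_zero] at this
    rw [this, measure_univ]
  have hZpos : 0 < Z := by
    rw [hZ, integral_pos_iff_support_of_nonneg_ae hWnn hWint]
    have hsub : Set.Ioo (0:ℝ) 1 ⊆ Function.support W := by
      intro w hw
      exact (Real.rpow_pos_of_pos (by nlinarith [hw.1, hw.2]) _).ne'
    calc (0:ℝ≥0∞) < 1 := by norm_num
      _ = ρ (Set.Ioo (0:ℝ) 1) := hIoo.symm
      _ ≤ ρ (Function.support W) := measure_mono hsub
  set φ : ℝ → ℝ := fun w => Real.log (w / (1 - w)) / 2 with hφdef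
  have hφ : Measurable φ :=
    ((measurable_id.div (measurable_const.sub measurable_id)).log).div_const 2
  set D : ℝ → ℝ≥0 := fun w => (Z⁻¹ * W w).toNNReal with hD
  have hDmeas : Measurable D := (measurable_const.mul hWmeas).real_toNNReal
  set ν : Measure ℝ := ρ.withDensity (fun w => (D w : ℝ≥0∞)) with hν
  set ξ : Measure ℝ := ν.map φ with hξ
  have hint' : Integrable (fun w => Z⁻¹ * W w) ρ := hWint.const_mul _
  have hnn' : 0 ≤ᵐ[ρ] fun w => Z⁻¹ * W w := by
    filter_upwards [hWnn] with w hw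
    exact mul_nonneg (inv_nonneg.mpr hZpos.le) hw
  have hνuniv : ν Set.univ = 1 := by
    rw [hν, withDensity_apply _ MeasurableSet.univ, Measure.restrict_univ]
    have : ∀ w, ((D w : ℝ≥0∞)) = ENNReal.ofReal (Z⁻¹ * W w) := fun w => rfl
    simp_rw [this]
    rw [← ofReal_integral_eq_lintegral_ofReal hint' hnn']
    rw [integral_const_mul, ← hZ, inv_mul_cancel₀ hZpos.ne']
    simp
  have hνprob : IsProbabilityMeasure ν := ⟨hνuniv⟩
  have hξprob : IsProbabilityMeasure ξ := Measure.isProbabilityMeasure_map hφ.aemeasurable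
  refine ⟨ξ, Z⁻¹, hξprob, inv_pos.mpr hZpos, fun k hk => ?_⟩
  set f : ℝ → ℝ := fun x => Real.exp ((2 * (k:ℝ) - n) * x) with hf
  have hfmeas : Measurable f := Real.measurable_exp.comp (measurable_const.mul measurable_id)
  -- the smul integrand equals the nice function a.e.
  have haeeq : (fun w => D w • f (φ w)) =ᵐ[ρ]
      (fun w => Z⁻¹ * (w ^ k * (1 - w) ^ (n - k))) := by
    filter_upwards [hae, hWnn] with w hw hwnn
    have hnn : 0 ≤ Z⁻¹ * W w := mul_nonneg (inv_nonneg.mpr hZpos.le) hwnn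
    show (D w : ℝ) * f (φ w) = _
    rw [hD]
    simp only
    rw [Real.coe_toNNReal _ hnn]
    have := pt_fwd n k hk w hw
    calc Z⁻¹ * W w * f (φ w) = Z⁻¹ * (f (φ w) * W w) := by ring
      _ = Z⁻¹ * (w ^ k * (1 - w) ^ (n - k)) := by rw [hf, hφdef]; rw [this]
  have hbound : ∀ᵐ w ∂ρ, ‖D w • f (φ w)‖ ≤ Z⁻¹ := by
    filter_upwards [haeeq, hae] with w hweq hw
    rw [hweq, Real.norm_eq_abs]
    have h0 : (0:ℝ) ≤ w ^ k * (1 - w) ^ (n - k) :=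
      mul_nonneg (pow_nonneg hw.1.le _) (pow_nonneg (by linarith [hw.2]) _)
    have h1 : w ^ k * (1 - w) ^ (n - k) ≤ 1 := by
      have ha : w ^ k ≤ 1 := pow_le_one₀ hw.1.le hw.2.le
      have hb : (1 - w) ^ (n - k) ≤ 1 :=
        pow_le_one₀ (by linarith [hw.2]) (by linarith [hw.1])
      nlinarith [pow_nonneg hw.1.le k,
        pow_nonneg (show (0:ℝ) ≤ 1 - w by linarith [hw.2]) (n - k)]
    rw [abs_of_nonneg (mul_nonneg (inv_nonneg.mpr hZpos.le) h0)]
    nlinarith [inv_nonneg.mpr hZpos.le]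
  have hsmeas : AEStronglyMeasurable (fun w => D w • f (φ w)) ρ := by
    apply Measurable.aestronglyMeasurable
    exact (hDmeas.coe_nnreal_real).smul (hfmeas.comp hφ)
  have hsint : Integrable (fun w => D w • f (φ w)) ρ :=
    (integrable_const (Z⁻¹)).mono' hsmeas hbound
  have hint : Integrable f ξ := by
    rw [hξ, integrable_map_measure hfmeas.aestronglyMeasurable hφ.aemeasurable]
    rw [hν, integrable_withDensity_iff_integrable_smul hDmeas]
    exact hsint
  refine ⟨hint, ?_⟩
  rw [hξ, integral_map hφ.aemeasurable hfmeas.aestronglyMeasurable]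
  rw [hν, integral_withDensity_eq_integral_smul hDmeas]
  rw [integral_congr_ae haeeq, integral_const_mul, ← hmom k hk]


lemma pt_bwd (n k : ℕ) (hk : k ≤ n) (x : ℝ) :
    (Real.exp x / (2 * Real.cosh x)) ^ k * (1 - Real.exp x / (2 * Real.cosh x)) ^ (n - k)
      * (2 * Real.cosh x) ^ n = Real.exp ((2 * (k:ℝ) - n) * x) := by
  have hc : 2 * Real.cosh x = Real.exp x + Real.exp (-x) := by
    rw [Real.cosh_eq]; ring
  have hcpos : 0 < 2 * Real.cosh x := by positivity
  have h1 : 1 - Real.exp x / (2 * Real.cosh x) = Real.exp (-x) / (2 * Real.cosh x) := by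
    field_simp
    linarith [hc]
  have h2 : ((2*Real.cosh x)^k * (2*Real.cosh x)^(n-k) : ℝ) = (2*Real.cosh x)^n := by
    rw [← pow_add]; congr 1; omega
  rw [h1, div_pow, div_pow, div_mul_div_comm, h2, div_mul_cancel₀ _ (by positivity)]
  rw [← Real.exp_nat_mul, ← Real.exp_nat_mul, ← Real.exp_add]
  congr 1
  push_cast [Nat.cast_sub hk]
  ring

lemma cosh_pow_eq (n : ℕ) (x : ℝ) : (2 * Real.cosh x) ^ n
    = ∑ k ∈ Finset.range (n+1), (n.choose k : ℝ) * Real.exp ((2*(k:ℝ)-n)*x) := by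
  have hc : 2 * Real.cosh x = Real.exp x + Real.exp (-x) := by
    rw [Real.cosh_eq]; ring
  rw [hc, add_pow]
  refine Finset.sum_congr rfl fun k hk => ?_
  have hk' : k ≤ n := Nat.lt_succ_iff.mp (Finset.mem_range.mp hk)
  rw [← Real.exp_nat_mul, ← Real.exp_nat_mul, ← Real.exp_add]
  have : (k:ℝ) * x + ((n-k:ℕ):ℝ) * (-x) = (2*(k:ℝ)-n) * x := by
    push_cast [Nat.cast_sub hk']; ring
  rw [this]; ring

lemma backward (n : ℕ) (m : ℕ → ℝ)
    (ξ : Measure ℝ) [IsProbabilityMeasure ξ] (c : ℝ) (hc : 0 < c)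
    (h : ∀ k ≤ n, Integrable (fun x => Real.exp ((2 * (k:ℝ) - n) * x)) ξ ∧
          ∫ x, Real.exp ((2 * (k:ℝ) - n) * x) ∂ξ = c * m k)
    (hsum : ∑ k ∈ Finset.range (n+1), (n.choose k : ℝ) * m k = 1) :
    ∃ ρ : Measure ℝ, IsProbabilityMeasure ρ ∧ ρ (Set.Ioo (0:ℝ) 1)ᶜ = 0 ∧
      ∀ k ≤ n, m k = ∫ w, w ^ k * (1 - w) ^ (n - k) ∂ρ := by
  classical
  set G : ℝ → ℝ := fun x => c⁻¹ * (2 * Real.cosh x) ^ n with hG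
  have hcoshpos : ∀ x : ℝ, 0 < 2 * Real.cosh x := fun x => by positivity
  have hGnn : ∀ x, 0 ≤ G x := fun x => by
    rw [hG]; positivity
  have hGmeas : Measurable G :=
    measurable_const.mul ((measurable_const.mul Real.measurable_cosh).pow_const n)
  have hcoshint : Integrable (fun x => (2 * Real.cosh x) ^ n) ξ := by
    have : (fun x : ℝ => (2 * Real.cosh x) ^ n)
        = fun x => ∑ k ∈ Finset.range (n+1), (n.choose k : ℝ) * Real.exp ((2*(k:ℝ)-n)*x) := by
      funext x; exact cosh_pow_eq n x
    rw [this]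
    exact integrable_finset_sum _ fun k hk =>
      ((h k (Nat.lt_succ_iff.mp (Finset.mem_range.mp hk))).1.const_mul _)
  have hcoshintegral : ∫ x, (2 * Real.cosh x) ^ n ∂ξ = c := by
    have e1 : ∫ x, (2 * Real.cosh x) ^ n ∂ξ
        = ∑ k ∈ Finset.range (n+1), ∫ x, (n.choose k : ℝ) * Real.exp ((2*(k:ℝ)-n)*x) ∂ξ := by
      rw [← integral_finset_sum _ fun k hk =>
        ((h k (Nat.lt_succ_iff.mp (Finset.mem_range.mp hk))).1.const_mul _)]
      congr 1
      funext x
      exact cosh_pow_eq n x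
    rw [e1]
    have e2 : ∀ k ∈ Finset.range (n+1),
        ∫ x, (n.choose k : ℝ) * Real.exp ((2*(k:ℝ)-n)*x) ∂ξ = (n.choose k : ℝ) * (c * m k) := by
      intro k hk
      rw [integral_const_mul, (h k (Nat.lt_succ_iff.mp (Finset.mem_range.mp hk))).2]
    rw [Finset.sum_congr rfl e2]
    have : ∑ k ∈ Finset.range (n+1), (n.choose k : ℝ) * (c * m k)
        = c * ∑ k ∈ Finset.range (n+1), (n.choose k : ℝ) * m k := by
      rw [Finset.mul_sum]
      exact Finset.sum_congr rfl fun k _ => by ring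
    rw [this, hsum, mul_one]
  have hGint : Integrable G ξ := hcoshint.const_mul _
  have hGintegral : ∫ x, G x ∂ξ = 1 := by
    rw [hG]
    simp only
    rw [integral_const_mul, hcoshintegral, inv_mul_cancel₀ hc.ne']
  set D : ℝ → ℝ≥0 := fun x => (G x).toNNReal with hD
  have hDmeas : Measurable D := hGmeas.real_toNNReal
  set ν : Measure ℝ := ξ.withDensity (fun x => (D x : ℝ≥0∞)) with hν
  set ψ : ℝ → ℝ := fun x => Real.exp x / (2 * Real.cosh x) with hψdef
  have hψ : Measurable ψ := Real.measurable_exp.div (measurable_const.mul Real.measurable_cosh)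
  have hmem : ∀ x, ψ x ∈ Set.Ioo (0:ℝ) 1 := by
    intro x
    have hcosh : 2 * Real.cosh x = Real.exp x + Real.exp (-x) := by rw [Real.cosh_eq]; ring
    constructor
    · exact div_pos (Real.exp_pos x) (hcoshpos x)
    · rw [div_lt_one (hcoshpos x), hcosh]
      linarith [Real.exp_pos (-x)]
  have hνuniv : ν Set.univ = 1 := by
    rw [hν, withDensity_apply _ MeasurableSet.univ, Measure.restrict_univ]
    have : ∀ x, ((D x : ℝ≥0∞)) = ENNReal.ofReal (G x) := fun x => rfl
    simp_rw [this]
    rw [← ofReal_integral_eq_lintegral_ofReal hGint (Filter.Eventually.of_forall hGnn)]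
    rw [hGintegral]
    simp
  have hνprob : IsProbabilityMeasure ν := ⟨hνuniv⟩
  set ρ : Measure ℝ := ν.map ψ with hρ
  have hρprob : IsProbabilityMeasure ρ := Measure.isProbabilityMeasure_map hψ.aemeasurable
  refine ⟨ρ, hρprob, ?_, ?_⟩
  · rw [hρ, Measure.map_apply hψ measurableSet_Ioo.compl]
    have : ψ ⁻¹' (Set.Ioo (0:ℝ) 1)ᶜ = ∅ := by
      rw [Set.eq_empty_iff_forall_notMem]
      intro x hx
      exact hx (hmem x)
    rw [this, measure_empty]
  · intro k hk
    set g : ℝ → ℝ := fun w => w ^ k * (1 - w) ^ (n - k) with hg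
    have hgmeas : Measurable g :=
      (measurable_id.pow_const k).mul ((measurable_const.sub measurable_id).pow_const _)
    have hpt : ∀ x, D x • g (ψ x) = c⁻¹ * Real.exp ((2 * (k:ℝ) - n) * x) := by
      intro x
      show (D x : ℝ) * g (ψ x) = _
      rw [hD]
      simp only
      rw [Real.coe_toNNReal _ (hGnn x), hG, hg, hψdef]
      simp only
      have := pt_bwd n k hk x
      calc c⁻¹ * (2 * Real.cosh x) ^ n *
            ((Real.exp x / (2 * Real.cosh x)) ^ k * (1 - Real.exp x / (2 * Real.cosh x)) ^ (n - k))
          = c⁻¹ * ((Real.exp x / (2 * Real.cosh x)) ^ k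
              * (1 - Real.exp x / (2 * Real.cosh x)) ^ (n - k) * (2 * Real.cosh x) ^ n) := by ring
        _ = c⁻¹ * Real.exp ((2 * (k:ℝ) - n) * x) := by rw [this]
    rw [hρ, integral_map hψ.aemeasurable hgmeas.aestronglyMeasurable]
    rw [hν, integral_withDensity_eq_integral_smul hDmeas]
    have : ∫ x, D x • g (ψ x) ∂ξ = ∫ x, c⁻¹ * Real.exp ((2 * (k:ℝ) - n) * x) ∂ξ := by
      congr 1
      funext x
      exact hpt x
    rw [this, integral_const_mul, (h k hk).2, ← mul_assoc, inv_mul_cancel₀ hc.ne', one_mul]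


lemma key_sum_real (n : ℕ)
    (μ : Measure (Fin n → Bool)) [IsProbabilityMeasure μ]
    (hexch : ∀ π : Equiv.Perm (Fin n), Measure.map (fun f => f ∘ π) μ = μ)
    (E : ℕ → Set (Fin n → Bool))
    (hE : ∀ k, E k = {f | ∀ i : Fin n, (f i = true ↔ (i : ℕ) < k)}) :
    ∑ k ∈ Finset.range (n + 1), (n.choose k : ℝ) * (μ (E k)).toReal = 1 := by
  have h1 := key_sum n μ hexch E hE
  have h2 := congrArg ENNReal.toReal h1
  rw [ENNReal.toReal_sum (fun k _ => by
    exact ENNReal.mul_ne_top (ENNReal.natCast_ne_top _) (measure_ne_top μ _))] at h2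
  simpa [ENNReal.toReal_mul] using h2

theorem stmt_6 (n : ℕ) (hn : 1 ≤ n)
    (μ : Measure (Fin n → Bool)) [IsProbabilityMeasure μ]
    (hexch : ∀ π : Equiv.Perm (Fin n), Measure.map (fun f => f ∘ π) μ = μ)
    (E : ℕ → Set (Fin n → Bool))
    (hE : ∀ k, E k = {f | ∀ i : Fin n, (f i = true ↔ (i : ℕ) < k)}) :
    (∃ ρ : Measure ℝ, IsProbabilityMeasure ρ ∧ ρ (Set.Ioo (0 : ℝ) 1)ᶜ = 0 ∧
        ∀ k ≤ n, (μ (E k)).toReal = ∫ w, w ^ k * (1 - w) ^ (n - k) ∂ρ)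
      ↔ (∃ (ξ : Measure ℝ) (c : ℝ), IsProbabilityMeasure ξ ∧ 0 < c ∧
          ∀ k ≤ n,
            Integrable (fun x => Real.exp ((2 * (k : ℝ) - n) * x)) ξ ∧
            ∫ x, Real.exp ((2 * (k : ℝ) - n) * x) ∂ξ = c * (μ (E k)).toReal) := by
  constructor
  · rintro ⟨ρ, hρp, hρc, hmom⟩
    haveI := hρp
    exact forward n (fun k => (μ (E k)).toReal) ρ hρc hmom
  · rintro ⟨ξ, c, hξp, hc, h⟩
    haveI := hξp
    exact backward n (fun k => (μ (E k)).toReal) ξ c hc h (key_sum_real n μ hexch E hE)
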